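/- Let T be a bounded operator on a complex Hilbert space H. If the adjoint T* has an eigenvalue λ with |λ| < 1, then T is not a J-class operator. -/

import Mathlib

open Filter Topology

/-- The J-set of a vector `x` under a bounded operator `T`. -/
def JSet {X : Type*} [NormedAddCommGroup X] [NormedSpace ℂ X]
    (T : X →L[ℂ] X) (x : X) : Set X :=
  {y | ∃ k : ℕ → ℕ, StrictMono k ∧ (∀ n, 0 < k n) ∧ ∃ u : ℕ → X,
    Tendsto u atTop (𝓝 x) ∧ Tendsto (fun n => (T ^ k n) (u n)) atTop (𝓝 y)}

/-- `T` is a J-class operator if `J(x) = X` for some nonzero `x`. -/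
def IsJClass {X : Type*} [NormedAddCommGroup X] [NormedSpace ℂ X]
    (T : X →L[ℂ] X) : Prop :=
  ∃ x : X, x ≠ 0 ∧ JSet T x = Set.univ

/-- If the adjoint of `T` has an eigenvalue of modulus `< 1`, then `T` is not J-class. -/
theorem not_isJClass_of_adjoint_eigenvalue {H : Type*} [NormedAddCommGroup H]
    [InnerProductSpace ℂ H] [CompleteSpace H] (T : H →L[ℂ] H) (lam : ℂ)
    (hlam : ‖lam‖ < 1)
    (hev : ∃ v : H, v ≠ 0 ∧ ContinuousLinearMap.adjoint T v = lam • v) :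
    ¬ IsJClass T := by
  rintro ⟨x, hx, hJ⟩
  obtain ⟨v, hv, hev⟩ := hev
  have hmem : v ∈ JSet T x := by rw [hJ]; trivial
  obtain ⟨k, hk, hkpos, u, hu, hTu⟩ := hmem
  -- adjoint powers act on v by lam^m
  have hpow : ∀ m : ℕ, ((ContinuousLinearMap.adjoint T) ^ m) v = lam ^ m • v := by
    intro m
    induction m with
    | zero => simp
    | succ n ih =>
      rw [pow_succ, ContinuousLinearMap.mul_apply, hev, map_smul, ih,
        smul_smul, pow_succ, mul_comm]
  have hadj : ∀ m : ℕ, ContinuousLinearMap.adjoint (T ^ m)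
      = (ContinuousLinearMap.adjoint T) ^ m := by
    intro m
    rw [← ContinuousLinearMap.star_eq_adjoint, star_pow,
      ContinuousLinearMap.star_eq_adjoint]
  have key : ∀ n : ℕ, (inner ℂ v ((T ^ k n) (u n)) : ℂ)
      = (starRingEnd ℂ) lam ^ k n * inner ℂ v (u n) := by
    intro n
    rw [← ContinuousLinearMap.adjoint_inner_left, hadj, hpow,
      inner_smul_left, map_pow]
  -- limit of the inner products
  have h1 : Tendsto (fun n => (inner ℂ v ((T ^ k n) (u n)) : ℂ)) atTop
      (𝓝 (inner ℂ v v)) := Tendsto.inner tendsto_const_nhds hTu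
  have h2 : Tendsto (fun n => (starRingEnd ℂ) lam ^ k n * (inner ℂ v (u n) : ℂ)) atTop
      (𝓝 (0 * inner ℂ v x)) := by
    refine Tendsto.mul ?_ (Tendsto.inner tendsto_const_nhds hu)
    exact (tendsto_pow_atTop_nhds_zero_of_norm_lt_one
      (by simpa using hlam)).comp hk.tendsto_atTop
  rw [zero_mul] at h2
  have : (inner ℂ v v : ℂ) = 0 := tendsto_nhds_unique h1 ((h2.congr (fun n => (key n).symm)))
  exact hv (inner_self_eq_zero.mp this)
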